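/- Under the bounded bandwidth assumption B(w), a positive set of size at most p can be identified nonadaptively with a number of pools depending only on w and p (not on n): specifically, if a design of v₀ pools over 2w objects is p-cover-free, then assigning each object x_i the signature of (i mod 2w) yields a design of v₀ pools over n objects that correctly identifies every positive set of size ≤ p contained in a window of length w. -/
import Mathlib


open Finset

lemma inj_mod (w : ℕ) (a : ℕ) : Set.InjOn (· % (2 * w)) (Set.Ico a (a + 2 * w)) := by
  intro i hi j hj h
  simp only [Set.mem_Ico] at hi hj
  have h' : i % (2*w) = j % (2*w) := h
  rcases le_or_gt i j with hle | hlt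
  · have hd : 2 * w ∣ j - i := (Nat.modEq_iff_dvd' hle).mp h'
    have : j - i < 2 * w := by omega
    have := Nat.eq_zero_of_dvd_of_lt hd
    omega
  · have hd : 2 * w ∣ i - j := (Nat.modEq_iff_dvd' hlt.le).mp h'.symm
    have : i - j < 2 * w := by omega
    have := Nat.eq_zero_of_dvd_of_lt hd
    omega

theorem stmt14 (v₀ p w : ℕ) (hw : 1 ≤ w) (τ : ℕ → Finset (Fin v₀))
    (hcf : ∀ x < 2 * w, ∀ Y : Finset ℕ, (∀ y ∈ Y, y < 2 * w) → x ∉ Y → Y.card ≤ p →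
      ¬ τ x ⊆ Y.biUnion τ) :
    (∀ a : ℕ, Set.InjOn (· % (2 * w)) (Set.Ico a (a + 2 * w))) ∧
    (∀ (a : ℕ) (S : Finset ℕ), S ⊆ Finset.Ico a (a + w) → S.card ≤ p →
      ((Finset.Ico a (a + w)).filter fun i =>
          τ (i % (2 * w)) ⊆ S.biUnion fun s => τ (s % (2 * w))) = S) := by
  refine ⟨inj_mod w, ?_⟩
  intro a S hS hcard
  apply Finset.Subset.antisymm
  · intro i hi
    simp only [Finset.mem_filter] at hi
    obtain ⟨hiI, hsub⟩ := hi
    by_contra hiS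
    have hx : i % (2 * w) < 2 * w := Nat.mod_lt _ (by omega)
    have hY : ∀ y ∈ S.image (· % (2 * w)), y < 2 * w := by
      intro y hy
      simp only [Finset.mem_image] at hy
      obtain ⟨s, _, rfl⟩ := hy
      exact Nat.mod_lt _ (by omega)
    have hnot : i % (2 * w) ∉ S.image (· % (2 * w)) := by
      intro h
      simp only [Finset.mem_image] at h
      obtain ⟨s, hs, hmod⟩ := h
      have hsI := hS hs
      simp only [Finset.mem_Ico] at hsI hiI
      have := inj_mod w a (by simp [Set.mem_Ico]; omega)
        (show i ∈ Set.Ico a (a + 2 * w) by simp [Set.mem_Ico]; omega) hmod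
      exact hiS (this ▸ hs)
    have hc : (S.image (· % (2 * w))).card ≤ p :=
      le_trans (Finset.card_image_le) hcard
    refine hcf _ hx _ hY hnot hc ?_
    refine hsub.trans ?_
    intro v hv
    simp only [Finset.mem_biUnion] at hv ⊢
    obtain ⟨s, hs, hvs⟩ := hv
    exact ⟨s % (2 * w), Finset.mem_image_of_mem _ hs, hvs⟩
  · intro s hs
    simp only [Finset.mem_filter]
    exact ⟨hS hs, fun v hv => Finset.mem_biUnion.mpr ⟨s, hs, hv⟩⟩
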